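/- Let Q be a real d×d matrix, λ ∈ ℝ^d, n ∈ ℕ, and x(0) ∈ ℝ^d. Let A be the real (n+1)×(n+1) matrix with A_{ii} = −(n−i), A_{i+1,i} = n−i, other entries zero, and let 𝐐 = A ⊗ diag(λ) + I_{n+1} ⊗ Q. Define π(t) = exp(t𝐐)·(e_0 ⊗ x(0)) ∈ ℝ^{(n+1)d}, with components π^i(t) = (e_iᵀ ⊗ I_d)·π(t) ∈ ℝ^d for 0 ≤ i ≤ n. Then for every t ∈ ℝ and 0 ≤ i ≤ n, π^i(t) = C(n,i) · ∑_{k=0}^{i} (−1)^{i−k} C(i,k) · exp(t(Q − (n−k)·diag(λ))) · x(0). -/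

import Mathlib

open Kronecker NormedSpace Matrix

section Stmt6Aux

noncomputable def Mm (n : ℕ) : Matrix (Fin (n+1)) (Fin (n+1)) ℝ :=
  Matrix.of fun i k => (n.choose i : ℝ) * (-1 : ℝ) ^ ((i : ℕ) - (k : ℕ)) * ((i : ℕ).choose k : ℝ)

noncomputable def Nm (n : ℕ) : Matrix (Fin (n+1)) (Fin (n+1)) ℝ :=
  Matrix.of fun i k => ((i : ℕ).choose k : ℝ) * ((n.choose k : ℝ))⁻¹

def Am (n : ℕ) : Matrix (Fin (n+1)) (Fin (n+1)) ℝ :=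
  Matrix.of fun i j =>
    if i = j then -((n - (i : ℕ) : ℕ) : ℝ)
    else if (i : ℕ) = (j : ℕ) + 1 then ((n - (j : ℕ) : ℕ) : ℝ) else 0

noncomputable def Dm (n : ℕ) : Matrix (Fin (n+1)) (Fin (n+1)) ℝ :=
  Matrix.diagonal fun k => -((n - (k : ℕ) : ℕ) : ℝ)

lemma exp_reindex {m n : Type*} [Fintype m] [DecidableEq m] [Fintype n] [DecidableEq n]
    (e : m ≃ n) (A : Matrix m m ℝ) :
    exp (Matrix.reindex e e A) = Matrix.reindex e e (exp A) := by
  letI : SeminormedRing (Matrix m m ℝ) := Matrix.linftyOpSemiNormedRing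
  letI : NormedRing (Matrix m m ℝ) := Matrix.linftyOpNormedRing
  letI : NormedAlgebra ℝ (Matrix m m ℝ) := Matrix.linftyOpNormedAlgebra
  letI : SeminormedRing (Matrix n n ℝ) := Matrix.linftyOpSemiNormedRing
  letI : NormedRing (Matrix n n ℝ) := Matrix.linftyOpNormedRing
  letI : NormedAlgebra ℝ (Matrix n n ℝ) := Matrix.linftyOpNormedAlgebra
  letI : NormedAlgebra ℚ (Matrix m m ℝ) := NormedAlgebra.restrictScalars ℚ ℝ _
  letI : NormedAlgebra ℚ (Matrix n n ℝ) := NormedAlgebra.restrictScalars ℚ ℝ _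
  have hc : Continuous (Matrix.reindexAlgEquiv ℝ ℝ e) := by
    show Continuous fun A : Matrix m m ℝ => Matrix.reindex e e A
    exact continuous_id.matrix_submatrix _ _
  exact (map_exp (Matrix.reindexAlgEquiv ℝ ℝ e) hc A).symm

lemma alt_sum (p : ℕ) :
    ∑ m ∈ Finset.range (p + 1), (-1 : ℝ) ^ (p - m) * (p.choose m : ℝ)
      = if p = 0 then 1 else 0 := by
  have h1 : ∑ m ∈ Finset.range (p + 1), (-1 : ℝ) ^ (p - m) * (p.choose m : ℝ)
      = ∑ m ∈ Finset.range (p + 1), (-1 : ℝ) ^ m * (p.choose m : ℝ) := by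
    rw [← Finset.sum_range_reflect]
    apply Finset.sum_congr rfl
    intro m hm
    rw [Finset.mem_range] at hm
    have hm' : m ≤ p := Nat.lt_succ_iff.mp hm
    rw [Nat.add_sub_cancel] at *
    rw [Nat.sub_sub_self hm', Nat.choose_symm hm']
  rw [h1]
  have := @Int.alternating_sum_range_choose p
  have h2 : ((∑ i ∈ Finset.range (p + 1), (-1 : ℤ) ^ i * (p.choose i : ℤ) : ℤ) : ℝ)
      = ∑ m ∈ Finset.range (p + 1), (-1 : ℝ) ^ m * (p.choose m : ℝ) := by
    push_cast [mul_comm]; ring_nf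
  rw [← h2, this]
  split <;> norm_num


lemma MN (n : ℕ) : Mm n * Nm n = 1 := by
  ext i j
  rw [mul_apply]
  simp only [Mm, Nm, of_apply, one_apply]
  rcases lt_or_ge (i : ℕ) (j : ℕ) with hij | hij
  · -- i < j : everything vanishes
    have hne : i ≠ j := by
      intro h; rw [h] at hij; exact lt_irrefl _ hij
    rw [if_neg hne]
    apply Finset.sum_eq_zero
    intro k _
    rcases le_or_gt (k : ℕ) (i : ℕ) with hk | hk
    · have : (k : ℕ).choose j = 0 := Nat.choose_eq_zero_of_lt (lt_of_le_of_lt hk hij)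
      rw [this]; push_cast; ring
    · have : (i : ℕ).choose k = 0 := Nat.choose_eq_zero_of_lt hk
      rw [this]; push_cast; ring
  · -- j ≤ i
    have key : ∑ k : Fin (n+1),
        (n.choose i : ℝ) * (-1 : ℝ) ^ ((i : ℕ) - (k : ℕ)) * ((i : ℕ).choose k : ℝ)
          * (((k : ℕ).choose j : ℝ) * ((n.choose j : ℝ))⁻¹)
        = ∑ k ∈ Finset.range (n + 1),
        (n.choose i : ℝ) * (-1 : ℝ) ^ ((i : ℕ) - k) * ((i : ℕ).choose k : ℝ)
          * ((k.choose j : ℝ) * ((n.choose j : ℝ))⁻¹) :=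
      Fin.sum_univ_eq_sum_range (fun k => (n.choose i : ℝ) * (-1 : ℝ) ^ ((i : ℕ) - k)
        * ((i : ℕ).choose k : ℝ) * ((k.choose j : ℝ) * ((n.choose j : ℝ))⁻¹)) (n+1)
    rw [key]
    have hsub : Finset.Ico (j : ℕ) ((i : ℕ) + 1) ⊆ Finset.range (n + 1) := by
      intro k hk
      rw [Finset.mem_Ico] at hk; rw [Finset.mem_range]
      omega
    rw [← Finset.sum_subset hsub ?h0]
    case h0 =>
      intro k _ hk
      rw [Finset.mem_Ico, not_and_or, not_le, not_lt] at hk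
      rw [Nat.lt_iff_add_one_le] at hk
      rcases hk with hk | hk
      · have : k.choose j = 0 := Nat.choose_eq_zero_of_lt hk
        rw [this]; push_cast; ring
      · have : (i : ℕ).choose k = 0 := Nat.choose_eq_zero_of_lt hk
        rw [this]; push_cast; ring
    -- now sum over Ico j (i+1)
    have hIcc : ∑ k ∈ Finset.Ico (j : ℕ) ((i : ℕ) + 1),
        (n.choose i : ℝ) * (-1 : ℝ) ^ ((i : ℕ) - k) * ((i : ℕ).choose k : ℝ)
          * ((k.choose j : ℝ) * ((n.choose j : ℝ))⁻¹)
        = ∑ m ∈ Finset.range ((i : ℕ) - (j : ℕ) + 1),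
        (n.choose i : ℝ) * (-1 : ℝ) ^ ((i : ℕ) - ((j : ℕ) + m)) * ((i : ℕ).choose ((j:ℕ) + m) : ℝ)
          * ((((j:ℕ) + m).choose j : ℝ) * ((n.choose j : ℝ))⁻¹) := by
      rw [Finset.sum_Ico_eq_sum_range]
      apply Finset.sum_congr
      · congr 1; omega
      · intro m _; rfl
    rw [hIcc]
    have hterm : ∀ m ∈ Finset.range ((i : ℕ) - (j : ℕ) + 1),
        (n.choose i : ℝ) * (-1 : ℝ) ^ ((i : ℕ) - ((j : ℕ) + m)) * ((i : ℕ).choose ((j:ℕ) + m) : ℝ)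
          * ((((j:ℕ) + m).choose j : ℝ) * ((n.choose j : ℝ))⁻¹)
        = ((n.choose i : ℝ) * ((i:ℕ).choose j : ℝ) * ((n.choose j : ℝ))⁻¹)
          * ((-1 : ℝ) ^ (((i : ℕ) - (j : ℕ)) - m) * ((((i:ℕ) - (j:ℕ)).choose m : ℝ)) ) := by
      intro m hm
      rw [Finset.mem_range] at hm
      have hm' : m ≤ (i : ℕ) - (j : ℕ) := Nat.lt_succ_iff.mp hm
      have hjm : (j : ℕ) + m ≤ (i : ℕ) := by omega
      have hcc : (i : ℕ).choose ((j:ℕ) + m) * ((j:ℕ) + m).choose j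
          = (i : ℕ).choose j * ((i:ℕ) - (j:ℕ)).choose (((j:ℕ) + m) - (j:ℕ)) :=
        Nat.choose_mul (Nat.le_add_right _ _)
      have hexp : (i : ℕ) - ((j : ℕ) + m) = ((i : ℕ) - (j : ℕ)) - m := by omega
      have hsub2 : ((j:ℕ) + m) - (j:ℕ) = m := by omega
      rw [hexp]
      rw [hsub2] at hcc
      have := congrArg (fun x : ℕ => (x : ℝ)) hcc
      push_cast at this
      linear_combination ((n.choose (i:ℕ) : ℝ) * (-1 : ℝ) ^ (((i : ℕ) - (j : ℕ)) - m)
        * ((n.choose (j:ℕ) : ℝ))⁻¹) * this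
    rw [Finset.sum_congr rfl hterm, ← Finset.mul_sum, alt_sum]
    by_cases hij2 : i = j
    · subst hij2
      simp only [Nat.sub_self, if_pos rfl, if_pos rfl, Nat.choose_self, Nat.cast_one, mul_one]
      have : (n.choose i : ℝ) ≠ 0 := by
        have : 0 < n.choose i := Nat.choose_pos (by omega)
        positivity
      field_simp
    · have hlt : (j : ℕ) < (i : ℕ) := by
        rcases lt_or_eq_of_le hij with h | h
        · exact h
        · exact absurd (Fin.ext h.symm) hij2
      rw [if_neg hij2, if_neg (by omega), mul_zero]


lemma nat_key (n m j : ℕ) (hj : j ≤ m) (hm : m + 1 ≤ n) :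
    (n - m) * n.choose m * m.choose j = (m + 1 - j) * n.choose (m+1) * (m+1).choose j := by
  have h1 : n.choose (m+1) * (m+1) = n.choose m * (n-m) := Nat.choose_succ_right_eq n m
  have h2 : (m+1) * m.choose j = (m+1).choose (j+1) * (j+1) := Nat.add_one_mul_choose_eq m j
  have h3 : (m+1).choose (j+1) * (j+1) = (m+1).choose j * (m+1-j) := Nat.choose_succ_right_eq (m+1) j
  calc (n - m) * n.choose m * m.choose j = (n.choose m * (n-m)) * m.choose j := by ring
    _ = (n.choose (m+1) * (m+1)) * m.choose j := by rw [h1]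
    _ = n.choose (m+1) * ((m+1) * m.choose j) := by ring
    _ = n.choose (m+1) * ((m+1).choose (j+1) * (j+1)) := by rw [h2]
    _ = n.choose (m+1) * ((m+1).choose j * (m+1-j)) := by rw [h3]
    _ = (m + 1 - j) * n.choose (m+1) * (m+1).choose j := by ring


lemma real_key (n m j : ℕ) (hj : j ≤ m) (hm : m + 1 ≤ n) :
    -((n - (m+1) : ℕ) : ℝ) * ((n.choose (m+1) : ℝ) * (-1 : ℝ)^(m+1-j) * (((m+1).choose j : ℕ) : ℝ))
      + ((n - m : ℕ) : ℝ) * ((n.choose m : ℝ) * (-1 : ℝ)^(m-j) * ((m.choose j : ℕ) : ℝ))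
    = ((n.choose (m+1) : ℝ) * (-1 : ℝ)^(m+1-j) * (((m+1).choose j : ℕ) : ℝ)) * (-((n - j : ℕ) : ℝ)) := by
  have hc := congrArg (fun x : ℕ => (x : ℝ)) (nat_key n m j hj hm)
  push_cast at hc
  rw [Nat.cast_sub (by omega : m ≤ n), Nat.cast_sub (by omega : j ≤ m+1)] at hc
  have he : m + 1 - j = (m - j) + 1 := by omega
  rw [he, pow_succ]
  rw [Nat.cast_sub hm, Nat.cast_sub (by omega : m ≤ n), Nat.cast_sub (by omega : j ≤ n)]
  push_cast at hc ⊢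
  linear_combination ((-1 : ℝ)^(m-j)) * hc


lemma AM (n : ℕ) : Am n * Mm n = Mm n * Dm n := by
  ext i j
  rw [mul_apply, Dm, mul_diagonal]
  obtain ⟨iv, hiv⟩ := i
  match iv, hiv with
  | 0, hiv =>
    rw [Finset.sum_eq_single (⟨0, hiv⟩ : Fin (n+1))]
    · rw [show Am n ⟨0, hiv⟩ ⟨0, hiv⟩ = -((n - 0 : ℕ) : ℝ) from by simp [Am]]
      by_cases hj : j = ⟨0, hiv⟩
      · subst hj; ring
      · have hj' : 0 < (j : ℕ) := by
          rcases Nat.eq_zero_or_pos (j : ℕ) with h | h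
          · exact absurd (Fin.ext (by simpa using h.symm)) (Ne.symm hj)
          · exact h
        have hc : (0 : ℕ).choose j = 0 := Nat.choose_eq_zero_of_lt hj'
        simp [Mm, hc]
    · intro k _ hk
      have h1 : Am n ⟨0, hiv⟩ k = 0 := by
        rw [Am, of_apply, if_neg (Ne.symm hk), if_neg (by simp)]
      rw [h1, zero_mul]
    · intro h; exact absurd (Finset.mem_univ _) h
  | Nat.succ m, hiv =>
    have hmn : m + 1 ≤ n := by omega
    have hm1 : m < n + 1 := by omega
    have hne : (⟨m+1, hiv⟩ : Fin (n+1)) ≠ ⟨m, hm1⟩ := by simp [Fin.ext_iff]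
    have hsplit : ∀ k : Fin (n+1), Am n ⟨m+1, hiv⟩ k * Mm n k j
        = (if k = ⟨m+1, hiv⟩ then -((n - (m+1) : ℕ) : ℝ) * Mm n ⟨m+1, hiv⟩ j else 0)
          + (if k = ⟨m, hm1⟩ then ((n - m : ℕ) : ℝ) * Mm n ⟨m, hm1⟩ j else 0) := by
      intro k
      by_cases h1 : k = ⟨m+1, hiv⟩
      · subst h1
        rw [if_pos rfl, if_neg hne, add_zero, Am, of_apply, if_pos rfl]
      · rw [if_neg h1]
        by_cases h2 : k = ⟨m, hm1⟩
        · subst h2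
          rw [if_pos rfl, Am, of_apply, if_neg hne, if_pos (by simp), zero_add]
        · have hcond : ¬(((⟨m+1, hiv⟩ : Fin (n+1)) : ℕ) = (k : ℕ) + 1) := by
            intro h
            apply h2
            apply Fin.ext
            simp at h ⊢
            omega
          rw [if_neg h2, add_zero, Am, of_apply, if_neg (fun h => h1 h.symm), if_neg hcond,
            zero_mul]
    rw [Finset.sum_congr rfl (fun k _ => hsplit k), Finset.sum_add_distrib,
      Finset.sum_ite_eq' Finset.univ (⟨m+1, hiv⟩ : Fin (n+1)),
      Finset.sum_ite_eq' Finset.univ (⟨m, hm1⟩ : Fin (n+1)),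
      if_pos (Finset.mem_univ _), if_pos (Finset.mem_univ _)]
    rcases lt_trichotomy (j : ℕ) (m + 1) with hj | hj | hj
    · have hj' : (j : ℕ) ≤ m := by omega
      have hrk := real_key n m (j : ℕ) hj' hmn
      simpa [Mm] using hrk
    · have hcm : (m : ℕ).choose j = 0 := Nat.choose_eq_zero_of_lt (by omega)
      simp only [Mm, of_apply, hcm, Nat.cast_zero, mul_zero, zero_mul, add_zero]
      rw [hj]
      ring
    · have hc1 : (m + 1).choose j = 0 := Nat.choose_eq_zero_of_lt hj
      have hc2 : (m : ℕ).choose j = 0 := Nat.choose_eq_zero_of_lt (by omega)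
      simp [Mm, hc1, hc2]

lemma exp_pi_matrix {ι : Type*} [Fintype ι] {d : Type*} [Fintype d] [DecidableEq d]
    (f : ι → Matrix d d ℝ) : exp f = fun k => exp (f k) := by
  letI : SeminormedRing (Matrix d d ℝ) := Matrix.linftyOpSemiNormedRing
  letI : NormedRing (Matrix d d ℝ) := Matrix.linftyOpNormedRing
  letI : NormedAlgebra ℝ (Matrix d d ℝ) := Matrix.linftyOpNormedAlgebra
  letI : NormedAlgebra ℚ (Matrix d d ℝ) := NormedAlgebra.restrictScalars ℚ ℝ _
  exact Pi.exp_def f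

end Stmt6Aux

/-- Explicit solution `π^i(t)` of the forward ODE `π̇ = 𝐐 π`, `π(0) = e₀ ⊗ x(0)`. -/
theorem stmt_6 (d : ℕ) (hd : 1 ≤ d) (n : ℕ)
    (Q : Matrix (Fin d) (Fin d) ℝ) (l : Fin d → ℝ) (x0 : Fin d → ℝ)
    (A : Matrix (Fin (n + 1)) (Fin (n + 1)) ℝ)
    (hA : ∀ i j : Fin (n + 1), A i j =
      if i = j then -((n - (i : ℕ) : ℕ) : ℝ)
      else if (i : ℕ) = (j : ℕ) + 1 then ((n - (j : ℕ) : ℕ) : ℝ) else 0)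
    (bQ : Matrix (Fin (n + 1) × Fin d) (Fin (n + 1) × Fin d) ℝ)
    (hbQ : bQ = A ⊗ₖ Matrix.diagonal l + (1 : Matrix (Fin (n + 1)) (Fin (n + 1)) ℝ) ⊗ₖ Q)
    (v0 : Fin (n + 1) × Fin d → ℝ)
    (hv0 : v0 = fun p => if p.1 = 0 then x0 p.2 else 0)
    (t : ℝ) (i : Fin (n + 1)) :
    (fun a : Fin d => (exp (t • bQ) *ᵥ v0) (i, a)) =
      ((Nat.choose n i : ℝ)) •
        ∑ k ∈ Finset.range ((i : ℕ) + 1),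
          ((-1 : ℝ) ^ ((i : ℕ) - k) * (Nat.choose (i : ℕ) k : ℝ)) •
            (exp (t • (Q - ((n - k : ℕ) : ℝ) • Matrix.diagonal l)) *ᵥ x0) := by
  subst hbQ hv0
  have hA' : A = Am n := by
    ext i j
    rw [hA]
    rfl
  set B : Fin (n+1) → Matrix (Fin d) (Fin d) ℝ :=
    fun k => Q - ((n - (k : ℕ) : ℕ) : ℝ) • Matrix.diagonal l with hB
  have hMN := MN n
  have hMKNK : (Mm n ⊗ₖ (1 : Matrix (Fin d) (Fin d) ℝ)) * (Nm n ⊗ₖ 1) = 1 := by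
    rw [← Matrix.mul_kronecker_mul, hMN, Matrix.one_mul, Matrix.one_kronecker_one]
  have hinv : (Mm n ⊗ₖ (1 : Matrix (Fin d) (Fin d) ℝ))⁻¹ = Nm n ⊗ₖ 1 :=
    Matrix.inv_eq_right_inv hMKNK
  have hu : IsUnit (Mm n ⊗ₖ (1 : Matrix (Fin d) (Fin d) ℝ)) := (Matrix.isUnit_iff_isUnit_det _).mpr (Matrix.isUnit_det_of_right_inverse hMKNK)
  have h1 : Mm n * Dm n * Nm n = Am n := by
    rw [← AM n, mul_assoc, hMN, mul_one]
  have hconj : A ⊗ₖ Matrix.diagonal l + (1 : Matrix (Fin (n+1)) (Fin (n+1)) ℝ) ⊗ₖ Q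
      = (Mm n ⊗ₖ (1 : Matrix (Fin d) (Fin d) ℝ))
        * (Dm n ⊗ₖ Matrix.diagonal l + (1 : Matrix (Fin (n+1)) (Fin (n+1)) ℝ) ⊗ₖ Q)
        * (Nm n ⊗ₖ 1) := by
    rw [Matrix.mul_add, Matrix.add_mul, ← Matrix.mul_kronecker_mul, ← Matrix.mul_kronecker_mul,
      ← Matrix.mul_kronecker_mul, ← Matrix.mul_kronecker_mul, h1, Matrix.one_mul, Matrix.mul_one,
      Matrix.mul_one, hMN, hA', Matrix.one_mul, Matrix.mul_one]
  have hsmul : t • (A ⊗ₖ Matrix.diagonal l + (1 : Matrix (Fin (n+1)) (Fin (n+1)) ℝ) ⊗ₖ Q)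
      = (Mm n ⊗ₖ (1 : Matrix (Fin d) (Fin d) ℝ))
        * (t • (Dm n ⊗ₖ Matrix.diagonal l + (1 : Matrix (Fin (n+1)) (Fin (n+1)) ℝ) ⊗ₖ Q))
        * (Nm n ⊗ₖ 1) := by
    rw [hconj]
    simp only [Matrix.mul_smul, Matrix.smul_mul]
  have hmid : t • (Dm n ⊗ₖ Matrix.diagonal l + (1 : Matrix (Fin (n+1)) (Fin (n+1)) ℝ) ⊗ₖ Q)
      = Matrix.reindex (Equiv.prodComm (Fin d) (Fin (n+1))) (Equiv.prodComm (Fin d) (Fin (n+1)))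
          (Matrix.blockDiagonal fun k : Fin (n+1) => t • B k) := by
    ext p q
    obtain ⟨i, a⟩ := p; obtain ⟨j, b⟩ := q
    simp only [Matrix.smul_apply, Matrix.add_apply, Matrix.kroneckerMap_apply,
      Matrix.reindex_apply, Matrix.submatrix_apply, Equiv.prodComm_symm, Equiv.prodComm_apply,
      Prod.swap_prod_mk, Matrix.blockDiagonal_apply, Matrix.one_apply, Dm,
      Matrix.diagonal_apply, hB, Matrix.sub_apply, smul_eq_mul]
    split_ifs <;> ring
  have hexp : exp (t • (A ⊗ₖ Matrix.diagonal l
        + (1 : Matrix (Fin (n+1)) (Fin (n+1)) ℝ) ⊗ₖ Q))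
      = (Mm n ⊗ₖ (1 : Matrix (Fin d) (Fin d) ℝ))
        * (Matrix.reindex (Equiv.prodComm (Fin d) (Fin (n+1))) (Equiv.prodComm (Fin d) (Fin (n+1)))
            (Matrix.blockDiagonal fun k : Fin (n+1) => exp (t • B k)))
        * (Nm n ⊗ₖ 1) := by
    rw [hsmul, ← hinv, Matrix.exp_conj _ _ hu, hinv, hmid, exp_reindex,
      Matrix.exp_blockDiagonal, exp_pi_matrix]
  funext a
  rw [hexp, ← Matrix.mulVec_mulVec, ← Matrix.mulVec_mulVec]
  have hv1 : (Nm n ⊗ₖ (1 : Matrix (Fin d) (Fin d) ℝ)) *ᵥ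
      (fun p : Fin (n+1) × Fin d => if p.1 = 0 then x0 p.2 else 0) = fun p => x0 p.2 := by
    funext p
    obtain ⟨k, b⟩ := p
    simp [Matrix.mulVec, dotProduct, Fintype.sum_prod_type, Matrix.kroneckerMap_apply,
      Matrix.one_apply, Nm, mul_ite, ite_mul, zero_mul, mul_zero, Finset.sum_ite_eq,
      Finset.sum_ite_eq']
  rw [hv1]
  have hv2 : (Matrix.reindex (Equiv.prodComm (Fin d) (Fin (n+1)))
        (Equiv.prodComm (Fin d) (Fin (n+1)))
        (Matrix.blockDiagonal fun k : Fin (n+1) => exp (t • B k))) *ᵥ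
      (fun p : Fin (n+1) × Fin d => x0 p.2)
      = fun p => (exp (t • B p.1) *ᵥ x0) p.2 := by
    funext p
    obtain ⟨k, b⟩ := p
    simp [Matrix.mulVec, dotProduct, Fintype.sum_prod_type, Matrix.reindex_apply,
      Matrix.submatrix_apply, Matrix.blockDiagonal_apply, ite_mul, zero_mul,
      Finset.sum_ite_eq, Finset.sum_ite_eq']
  rw [hv2]
  have hlhs : ((Mm n ⊗ₖ (1 : Matrix (Fin d) (Fin d) ℝ)) *ᵥ
        (fun p : Fin (n+1) × Fin d => (exp (t • B p.1) *ᵥ x0) p.2)) (i, a)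
      = ∑ j : Fin (n+1), Mm n i j * (exp (t • B j) *ᵥ x0) a := by
    simp [Matrix.mulVec, dotProduct, Fintype.sum_prod_type, Matrix.kroneckerMap_apply,
      Matrix.one_apply, mul_ite, ite_mul, zero_mul, mul_zero, Finset.sum_ite_eq,
      Finset.sum_ite_eq']
  rw [hlhs]
  have hfin : ∑ j : Fin (n+1), Mm n i j * (exp (t • B j) *ᵥ x0) a
      = ∑ k ∈ Finset.range (n+1),
          ((n.choose i : ℝ) * (-1 : ℝ) ^ ((i : ℕ) - k) * ((i : ℕ).choose k : ℝ))
            * ((exp (t • (Q - ((n - k : ℕ) : ℝ) • Matrix.diagonal l)) *ᵥ x0) a) := by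
    rw [← Fin.sum_univ_eq_sum_range (fun k =>
      ((n.choose i : ℝ) * (-1 : ℝ) ^ ((i : ℕ) - k) * ((i : ℕ).choose k : ℝ))
        * ((exp (t • (Q - ((n - k : ℕ) : ℝ) • Matrix.diagonal l)) *ᵥ x0) a)) (n+1)]
    apply Finset.sum_congr rfl
    intro j _
    simp [Mm, hB]
  rw [hfin]
  have hsub : Finset.range ((i : ℕ) + 1) ⊆ Finset.range (n + 1) := by
    intro k hk
    rw [Finset.mem_range] at hk ⊢
    have := i.isLt
    omega
  rw [← Finset.sum_subset hsub ?hzero]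
  case hzero =>
    intro k _ hk
    rw [Finset.mem_range, not_lt] at hk
    have : (i : ℕ).choose k = 0 := Nat.choose_eq_zero_of_lt (by omega)
    rw [this]
    push_cast
    ring
  simp only [Finset.sum_apply, Pi.smul_apply, smul_eq_mul, Finset.mul_sum]
  apply Finset.sum_congr rfl
  intro k _
  ring
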